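/- Let n ≥ 1 and D ⊆ {1, …, n−1}. For every E ⊆ {1, …, n−1} with Peak(D) ⊆ Spike(E), the number of subsets M ⊆ {1, …, n} with D_M = E equals 2^{|Peak(D)|+1}; that is, the map M ↦ D_M from subsets of {1,…,n} onto {E ⊆ {1,…,n−1} : Spike(E) ⊇ Peak(D)} is a 2^{|Peak(D)|+1}-to-one cover. -/

import Mathlib

/-- `Peak(D) = {i ∈ D : i ≥ 2 and i - 1 ∉ D}`. -/
def peak (D : Finset ℕ) : Finset ℕ := D.filter (fun i => 2 ≤ i ∧ i - 1 ∉ D)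

/-- `Spike(E) = {i ≥ 1 : exactly one of i and i - 1 lies in E}` (for sets of positive
integers, so that `0 ∉ E`). -/
def spike (E : Finset ℕ) : Set ℕ :=
  {i | 1 ≤ i ∧ ((i ∈ E ∧ i - 1 ∉ E) ∨ (i ∉ E ∧ i - 1 ∈ E))}

/-- `D_M = {i ∈ {1, …, n-1} : (i ∈ D and i ∉ M) or (i ∉ D and i + 1 ∈ M)}`, the descent
set of the marking `M` of a word with descent set `D`. -/
def descMark (n : ℕ) (D M : Finset ℕ) : Finset ℕ :=
  (Finset.Icc 1 (n - 1)).filter (fun i => (i ∈ D ∧ i ∉ M) ∨ (i ∉ D ∧ (i + 1) ∈ M))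

/-- "starts of runs" and "ends of runs" of a finite set are equinumerous (telescoping). -/
lemma runs_eq (n : ℕ) (D : Finset ℕ) (h0 : 0 ∉ D) (hn : n ∉ D) :
    ((Finset.range n).filter (fun i => i + 1 ∈ D ∧ i ∉ D)).card
      = ((Finset.range n).filter (fun i => i ∈ D ∧ i + 1 ∉ D)).card := by
  have key := Finset.sum_range_sub (f := fun j => if j ∈ D then (1 : ℤ) else 0) (n := n)
  have h1 : ∀ i ∈ Finset.range n,
      (if i + 1 ∈ D then (1:ℤ) else 0) - (if i ∈ D then (1:ℤ) else 0)
        = (if i + 1 ∈ D ∧ i ∉ D then (1:ℤ) else 0)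
          - (if i ∈ D ∧ i + 1 ∉ D then (1:ℤ) else 0) := by
    intro i _
    by_cases ha : i + 1 ∈ D <;> by_cases hb : i ∈ D <;> simp [ha, hb]
  rw [Finset.sum_congr rfl h1] at key
  rw [Finset.sum_sub_distrib, Finset.sum_boole, Finset.sum_boole] at key
  simp only [h0, hn, if_false] at key
  have key2 : (((Finset.range n).filter (fun i => i + 1 ∈ D ∧ i ∉ D)).card : ℤ)
      = ((Finset.range n).filter (fun i => i ∈ D ∧ i + 1 ∉ D)).card := by
    have := key
    omega
  exact_mod_cast key2

/-- The number of "free" positions equals `|peak D| + 1`. -/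
lemma cardF (n : ℕ) (hn : 1 ≤ n) (D : Finset ℕ) (hD : D ⊆ Finset.Icc 1 (n - 1)) :
    ((Finset.Icc 1 n).filter (fun j => j ∉ D ∧ (j = 1 ∨ j - 1 ∈ D))).card
      = (peak D).card + 1 := by
  have hDn : ∀ j ∈ D, 1 ≤ j ∧ j + 1 ≤ n := by
    intro j hj; have := Finset.mem_Icc.mp (hD hj); omega
  have h0 : 0 ∉ D := fun h => by have := hDn 0 h; omega
  have hnD : n ∉ D := fun h => by have := hDn n h; omega
  set A := (Finset.range n).filter (fun i => i + 1 ∈ D ∧ i ∉ D) with hA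
  set B := (Finset.range n).filter (fun i => i ∈ D ∧ i + 1 ∉ D) with hB
  set F := (Finset.Icc 1 n).filter (fun j => j ∉ D ∧ (j = 1 ∨ j - 1 ∈ D)) with hFd
  -- peak D ↔ A.filter (1 ≤ ·)
  have hpeak : (peak D).card = (A.filter (fun i => 1 ≤ i)).card := by
    apply Finset.card_nbij' (i := fun j => j - 1) (j := fun i => i + 1)
    · intro j hj
      simp only [Finset.mem_coe, peak, Finset.mem_filter] at hj
      obtain ⟨hjD, hj2, hjm⟩ := hj
      have := hDn j hjD
      simp only [Finset.mem_coe, hA, Finset.mem_filter, Finset.mem_range]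
      constructor
      · refine ⟨by omega, ?_, hjm⟩
        have : j - 1 + 1 = j := by omega
        rw [this]; exact hjD
      · omega
    · intro i hi
      simp only [Finset.mem_coe, hA, Finset.mem_filter, Finset.mem_range] at hi
      obtain ⟨⟨_, hi1, hi2⟩, hi3⟩ := hi
      simp only [Finset.mem_coe, peak, Finset.mem_filter]
      exact ⟨hi1, by omega, by simpa using hi2⟩
    · intro j hj
      simp only [Finset.mem_coe, peak, Finset.mem_filter] at hj
      beta_reduce
      omega
    · intro i _; beta_reduce; omega
  -- F.filter (2 ≤ ·) ↔ B
  have hFB : (F.filter (fun j => 2 ≤ j)).card = B.card := by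
    apply Finset.card_nbij' (i := fun j => j - 1) (j := fun i => i + 1)
    · intro j hj
      simp only [Finset.mem_coe, hFd, Finset.mem_filter, Finset.mem_Icc] at hj
      obtain ⟨⟨⟨h1, h2⟩, h3, h4⟩, h5⟩ := hj
      have hjm : j - 1 ∈ D := by rcases h4 with h | h; omega; exact h
      simp only [Finset.mem_coe, hB, Finset.mem_filter, Finset.mem_range]
      refine ⟨by omega, hjm, ?_⟩
      have : j - 1 + 1 = j := by omega
      rw [this]; exact h3
    · intro i hi
      simp only [Finset.mem_coe, hB, Finset.mem_filter, Finset.mem_range] at hi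
      obtain ⟨_, hi1, hi2⟩ := hi
      have := hDn i hi1
      simp only [Finset.mem_coe, hFd, Finset.mem_filter, Finset.mem_Icc]
      exact ⟨⟨⟨by omega, by omega⟩, hi2, Or.inr (by simpa using hi1)⟩, by omega⟩
    · intro j hj
      simp only [Finset.mem_coe, Finset.mem_filter] at hj
      beta_reduce
      omega
    · intro i _; beta_reduce; omega
  -- the small parts
  have hAsplit : (A.filter (fun i => 1 ≤ i)).card + (A.filter (fun i => ¬ 1 ≤ i)).card
      = A.card := Finset.card_filter_add_card_filter_not _
  have hFsplit : (F.filter (fun j => 2 ≤ j)).card + (F.filter (fun j => ¬ 2 ≤ j)).card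
      = F.card := Finset.card_filter_add_card_filter_not _
  have hA0 : (A.filter (fun i => ¬ 1 ≤ i)).card = if 1 ∈ D then 1 else 0 := by
    have : A.filter (fun i => ¬ 1 ≤ i) = if 1 ∈ D then {0} else ∅ := by
      ext i
      simp only [hA, Finset.mem_filter, Finset.mem_range]
      constructor
      · rintro ⟨⟨hi, h1, h2⟩, h3⟩
        have : i = 0 := by omega
        subst this
        simp only [zero_add] at h1
        simp [h1]
      · intro hi
        by_cases h1d : 1 ∈ D
        · simp only [h1d, if_true, Finset.mem_singleton] at hi
          subst hi
          exact ⟨⟨by omega, by simpa using h1d, h0⟩, by omega⟩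
        · simp [h1d] at hi
    rw [this]
    by_cases h1d : 1 ∈ D <;> simp [h1d]
  have hF0 : (F.filter (fun j => ¬ 2 ≤ j)).card = if 1 ∈ D then 0 else 1 := by
    have : F.filter (fun j => ¬ 2 ≤ j) = if 1 ∈ D then ∅ else {1} := by
      ext j
      simp only [hFd, Finset.mem_filter, Finset.mem_Icc]
      constructor
      · rintro ⟨⟨⟨h1, h2⟩, h3, h4⟩, h5⟩
        have : j = 1 := by omega
        subst this
        simp [h3]
      · intro hj
        by_cases h1d : 1 ∈ D
        · simp [h1d] at hj
        · simp only [h1d, if_false, Finset.mem_singleton] at hj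
          subst hj
          exact ⟨⟨⟨le_refl 1, hn⟩, h1d, Or.inl rfl⟩, by omega⟩
    rw [this]
    by_cases h1d : 1 ∈ D <;> simp [h1d]
  have hAB : A.card = B.card := runs_eq n D h0 hnD
  by_cases h1d : 1 ∈ D
  · rw [if_pos h1d] at hA0 hF0; omega
  · rw [if_neg h1d] at hA0 hF0; omega

theorem stmt17 (n : ℕ) (hn : 1 ≤ n) (D : Finset ℕ) (hD : D ⊆ Finset.Icc 1 (n - 1))
    (E : Finset ℕ) (hE : E ⊆ Finset.Icc 1 (n - 1)) (hPS : ↑(peak D) ⊆ spike E) :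
    ((Finset.Icc 1 n).powerset.filter (fun M => descMark n D M = E)).card
      = 2 ^ ((peak D).card + 1) := by
  classical
  have hDn : ∀ j ∈ D, 1 ≤ j ∧ j + 1 ≤ n := by
    intro j hj; have := Finset.mem_Icc.mp (hD hj); omega
  have hEn : ∀ j ∈ E, 1 ≤ j ∧ j + 1 ≤ n := by
    intro j hj; have := Finset.mem_Icc.mp (hE hj); omega
  set F := (Finset.Icc 1 n).filter (fun j => j ∉ D ∧ (j = 1 ∨ j - 1 ∈ D)) with hFd
  set forced := (Finset.Icc 1 n).filter
      (fun j => (j ∈ D ∧ j ∉ E) ∨ (j ∉ D ∧ j ≠ 1 ∧ j - 1 ∉ D ∧ j - 1 ∈ E)) with hfd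
  -- the spike property for peaks, restated
  have hspike : ∀ j, j ∈ D → 2 ≤ j → j - 1 ∉ D → ((j ∈ E ∧ j - 1 ∉ E) ∨ (j ∉ E ∧ j - 1 ∈ E)) := by
    intro j hj h2 hm
    have : j ∈ peak D := by simp only [peak, Finset.mem_filter]; exact ⟨hj, h2, hm⟩
    exact (hPS (by exact_mod_cast this)).2
  have hcard : ((Finset.Icc 1 n).powerset.filter (fun M => descMark n D M = E)).card
      = F.powerset.card := by
    apply Finset.card_nbij' (i := fun M => M ∩ F) (j := fun S => S ∪ forced)
    · intro M _
      exact Finset.mem_powerset.mpr Finset.inter_subset_right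
    · -- S ⊆ F implies S ∪ forced is a valid marking with descMark = E
      intro S hS
      have hSF : S ⊆ F := Finset.mem_powerset.mp hS
      have hSnD : ∀ j ∈ S, j ∉ D ∧ (j = 1 ∨ j - 1 ∈ D) := by
        intro j hj
        have := hSF hj
        simp only [hFd, Finset.mem_filter] at this
        exact this.2
      -- membership in S ∪ forced for constrained positions
      have memMD : ∀ j ∈ D, (j ∈ S ∪ forced ↔ j ∉ E) := by
        intro j hj
        have hj' := hDn j hj
        have hjS : j ∉ S := fun h => (hSnD j h).1 hj
        simp only [Finset.mem_union, hjS, false_or, hfd, Finset.mem_filter, Finset.mem_Icc]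
        constructor
        · rintro ⟨_, ⟨_, h⟩ | ⟨h, _⟩⟩
          · exact h
          · exact absurd hj h
        · intro h
          exact ⟨⟨by omega, by omega⟩, Or.inl ⟨hj, h⟩⟩
      have memMnD : ∀ j, j ∉ D → 2 ≤ j → j ≤ n → j - 1 ∉ D → (j ∈ S ∪ forced ↔ j - 1 ∈ E) := by
        intro j hjD h2 hjn hm
        have hjS : j ∉ S := by
          intro h
          rcases (hSnD j h).2 with h1 | h1
          · omega
          · exact hm h1
        simp only [Finset.mem_union, hjS, false_or, hfd, Finset.mem_filter, Finset.mem_Icc]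
        constructor
        · rintro ⟨_, ⟨h, _⟩ | ⟨_, _, _, h⟩⟩
          · exact absurd h hjD
          · exact h
        · intro h
          exact ⟨⟨by omega, hjn⟩, Or.inr ⟨hjD, by omega, hm, h⟩⟩
      simp only [Finset.mem_coe, Finset.mem_filter, Finset.mem_powerset]
      constructor
      · apply Finset.union_subset ((hSF.trans (Finset.filter_subset _ _)))
        exact Finset.filter_subset _ _
      · ext i
        simp only [descMark, Finset.mem_filter, Finset.mem_Icc]
        constructor
        · rintro ⟨⟨h1, h2⟩, hcond⟩
          rcases hcond with ⟨hiD, hiM⟩ | ⟨hiD, hiM⟩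
          · by_contra hiE
            exact hiM ((memMD i hiD).mpr hiE)
          · by_cases hjD : i + 1 ∈ D
            · have hsp := hspike (i + 1) hjD (by omega) (by simpa using hiD)
              have : i + 1 ∉ E := (memMD (i + 1) hjD).mp hiM
              simp only [Nat.add_sub_cancel] at hsp
              tauto
            · have := (memMnD (i + 1) hjD (by omega) (by omega) (by simpa using hiD)).mp hiM
              simpa using this
        · intro hiE
          have hrange := hEn i hiE
          refine ⟨⟨by omega, by omega⟩, ?_⟩
          by_cases hiD : i ∈ D
          · exact Or.inl ⟨hiD, fun h => ((memMD i hiD).mp h) hiE⟩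
          · refine Or.inr ⟨hiD, ?_⟩
            by_cases hjD : i + 1 ∈ D
            · have hsp := hspike (i + 1) hjD (by omega) (by simpa using hiD)
              simp only [Nat.add_sub_cancel] at hsp
              apply (memMD (i + 1) hjD).mpr
              tauto
            · apply (memMnD (i + 1) hjD (by omega) (by omega) (by simpa using hiD)).mpr
              simpa using hiE
    · -- left inverse : (M ∩ F) ∪ forced = M
      intro M hM
      simp only [Finset.mem_coe, Finset.mem_filter, Finset.mem_powerset] at hM
      obtain ⟨hMsub, hMd⟩ := hM
      have hiff : ∀ i, 1 ≤ i → i ≤ n - 1 →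
          (((i ∈ D ∧ i ∉ M) ∨ (i ∉ D ∧ i + 1 ∈ M)) ↔ i ∈ E) := by
        intro i h1 h2
        rw [← hMd]
        simp [descMark, Finset.mem_filter, Finset.mem_Icc, h1, h2]
      ext j
      simp only [Finset.mem_union, Finset.mem_inter]
      constructor
      · rintro (⟨hjM, _⟩ | hjf)
        · exact hjM
        · simp only [hfd, Finset.mem_filter, Finset.mem_Icc] at hjf
          obtain ⟨⟨h1, h2⟩, hb⟩ := hjf
          rcases hb with ⟨hjD, hjE⟩ | ⟨hjD, hj1, hjm, hjE⟩
          · have hr := hDn j hjD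
            have := (hiff j (by omega) (by omega))
            by_contra hjM
            exact hjE (this.mp (Or.inl ⟨hjD, hjM⟩))
          · have h2' : 2 ≤ j := by omega
            have := (hiff (j - 1) (by omega) (by omega)).mpr hjE
            rcases this with ⟨h, _⟩ | ⟨_, h⟩
            · exact absurd h hjm
            · have : j - 1 + 1 = j := by omega
              rwa [this] at h
      · intro hjM
        have hjn := Finset.mem_Icc.mp (hMsub hjM)
        by_cases hjF : j ∈ F
        · exact Or.inl ⟨hjM, hjF⟩
        · simp only [hFd, Finset.mem_filter, Finset.mem_Icc, hjn, true_and] at hjF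
          push_neg at hjF
          right
          simp only [hfd, Finset.mem_filter, Finset.mem_Icc]
          refine ⟨hjn, ?_⟩
          by_cases hjD : j ∈ D
          · have hr := hDn j hjD
            left
            refine ⟨hjD, fun hjE => ?_⟩
            rcases (hiff j (by omega) (by omega)).mpr hjE with ⟨_, h⟩ | ⟨h, _⟩
            · exact h hjM
            · exact h hjD
          · obtain ⟨hj1, hjm⟩ := hjF hjD
            have h2' : 2 ≤ j := by omega
            right
            refine ⟨hjD, hj1, hjm, ?_⟩
            apply (hiff (j - 1) (by omega) (by omega)).mp
            right
            refine ⟨hjm, ?_⟩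
            have : j - 1 + 1 = j := by omega
            rwa [this]
    · -- right inverse : (S ∪ forced) ∩ F = S
      intro S hS
      have hSF : S ⊆ F := Finset.mem_powerset.mp hS
      ext j
      simp only [Finset.mem_inter, Finset.mem_union]
      constructor
      · rintro ⟨hjS | hjf, hjF⟩
        · exact hjS
        · exfalso
          simp only [hfd, Finset.mem_filter] at hjf
          simp only [hFd, Finset.mem_filter] at hjF
          rcases hjf.2 with ⟨h, _⟩ | ⟨_, h1, h2, _⟩
          · exact hjF.2.1 h
          · rcases hjF.2.2 with h | h
            · exact h1 h
            · exact h2 h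
      · intro hjS
        exact ⟨Or.inl hjS, hSF hjS⟩
  rw [hcard, Finset.card_powerset, cardF n hn D hD]
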